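/- The 3-by-3 matrix A with rows (0, √(1−|λ₁|²), −conj(λ₁)√(1−|λ₂|²)), (0, λ₁, √(1−|λ₁|²)√(1−|λ₂|²)), (0, 0, λ₂), where |λ₁|, |λ₂| < 1, satisfies A A* A = A, i.e., A is a partial isometry. -/

import Mathlib

open Matrix

theorem three_by_three_rank_two_partial_isometry (l1 l2 : ℂ)
    (h1 : ‖l1‖ < 1) (h2 : ‖l2‖ < 1) :
    let A : Matrix (Fin 3) (Fin 3) ℂ :=
      !![0, (Real.sqrt (1 - ‖l1‖ ^ 2) : ℂ),
           -(starRingEnd ℂ l1) * (Real.sqrt (1 - ‖l2‖ ^ 2) : ℂ);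
         0, l1, (Real.sqrt (1 - ‖l1‖ ^ 2) : ℂ) * (Real.sqrt (1 - ‖l2‖ ^ 2) : ℂ);
         0, 0, l2]
    A * Aᴴ * A = A := by
  intro A
  set s : ℂ := (Real.sqrt (1 - ‖l1‖ ^ 2) : ℂ) with hsdef
  set t : ℂ := (Real.sqrt (1 - ‖l2‖ ^ 2) : ℂ) with htdef
  have hs1 : s ^ 2 = 1 - (starRingEnd ℂ) l1 * l1 := by
    have hm1 : (starRingEnd ℂ) l1 * l1 = ((‖l1‖ ^ 2 : ℝ) : ℂ) := by
      rw [mul_comm, Complex.mul_conj, Complex.normSq_eq_norm_sq] <;> push_cast <;> try ring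
    rw [hsdef, ← Complex.ofReal_pow, Real.sq_sqrt (by nlinarith [norm_nonneg l1]), hm1]
    try push_cast
    try ring
  have hs2 : t ^ 2 = 1 - (starRingEnd ℂ) l2 * l2 := by
    have hm2 : (starRingEnd ℂ) l2 * l2 = ((‖l2‖ ^ 2 : ℝ) : ℂ) := by
      rw [mul_comm, Complex.mul_conj, Complex.normSq_eq_norm_sq] <;> push_cast <;> try ring
    rw [htdef, ← Complex.ofReal_pow, Real.sq_sqrt (by nlinarith [norm_nonneg l2]), hm2]
    try push_cast
    try ring
  have hca : starRingEnd ℂ s = s := Complex.conj_ofReal _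
  have hcb : starRingEnd ℂ t = t := Complex.conj_ofReal _
  set c1 : ℂ := (starRingEnd ℂ) l1 with hc1
  set c2 : ℂ := (starRingEnd ℂ) l2 with hc2
  have hcc1 : starRingEnd ℂ c1 = l1 := Complex.conj_conj l1
  have hcc2 : starRingEnd ℂ c2 = l2 := Complex.conj_conj l2
  show A * Aᴴ * A = A
  ext i j
  fin_cases i <;> fin_cases j <;>
    simp only [show ((⟨0, by omega⟩ : Fin 3)) = 0 from rfl,
      show ((⟨1, by omega⟩ : Fin 3)) = 1 from rfl,
      show ((⟨2, by omega⟩ : Fin 3)) = 2 from rfl,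
      A, mul_apply, conjTranspose_apply, Fin.sum_univ_three, of_apply, cons_val',
      cons_val_zero, cons_val_one, cons_val_two, head_cons, head_fin_const, tail_cons,
      empty_val', cons_val_fin_one, _root_.map_mul, map_neg, map_zero, hca, hcb,
      Complex.conj_conj, star_zero, star_neg, star_mul', Complex.star_def, ← hc1, ← hc2,
      hcc1, hcc2, ← hsdef, ← htdef] <;>
    try ring
  · linear_combination s * hs1
  · linear_combination (-c1 * t * t ^ 2) * hs1 - c1 * t * hs2
  · linear_combination l1 * hs1
  · linear_combination s * t * t ^ 2 * hs1 + s * t * hs2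
  · linear_combination l2 * t ^ 2 * hs1 + l2 * hs2
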